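/- arXiv:2512.20686 — 2 statements merged into one kernel-verified Lean document; each statement's English description precedes it below -/
import Mathlib

section
/- For a fixed vote vector p with positive integer entries and any cut point c ∈ [0,1], the apportionment sequence S_c(p) = s_1, s_2, ... is periodic with period P = (p_1 + ... + p_n)/gcd(p_1, ..., p_n): s_{mP + k} = s_k for all k = 1, ..., P and all m ≥ 1, and P is the minimal period. -/
open ENNReal

/-- Number of seats party `i` holds after the first `h` seats of sequence `s`. -/
def alloc {n : ℕ} (s : ℕ → Fin n) (i : Fin n) (h : ℕ) : ℕ :=
  ((Finset.range h).filter (fun t => s t = i)).card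

/-- `s` is the apportionment sequence of the stationary divisor method with cut
point `c` for votes `p`: each seat goes to the party maximizing `pᵢ/(aᵢ+c)`
(computed in `ℝ≥0∞`, so that `pᵢ/0 = ∞` encodes the Adams convention), with
ties broken in favor of the smaller index. -/
def IsStationarySeq {n : ℕ} (p : Fin n → ℕ) (c : NNReal) (s : ℕ → Fin n) : Prop :=
  ∀ h : ℕ, ∀ j : Fin n,
    (p j : ℝ≥0∞) / ((alloc s j h : ℝ≥0∞) + (c : ℝ≥0∞)) <
        (p (s h) : ℝ≥0∞) / ((alloc s (s h) h : ℝ≥0∞) + (c : ℝ≥0∞)) ∨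
    ((p (s h) : ℝ≥0∞) / ((alloc s (s h) h : ℝ≥0∞) + (c : ℝ≥0∞)) =
        (p j : ℝ≥0∞) / ((alloc s j h : ℝ≥0∞) + (c : ℝ≥0∞)) ∧ s h ≤ j)


lemma cross_lt (a b x y : NNReal) (ha : a ≠ 0) (hb : b ≠ 0) :
    (a : ℝ≥0∞) / (x : ℝ≥0∞) < (b : ℝ≥0∞) / (y : ℝ≥0∞) ↔ a * y < b * x := by
  rcases eq_or_ne x 0 with rfl | hx
  · simp only [ENNReal.coe_zero, ENNReal.div_zero (ENNReal.coe_ne_zero.2 ha), mul_zero]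
    constructor
    · intro h; exact absurd h (by simp)
    · intro h; exact absurd h (by simp)
  · rcases eq_or_ne y 0 with rfl | hy
    · simp only [ENNReal.coe_zero, ENNReal.div_zero (ENNReal.coe_ne_zero.2 hb), mul_zero]
      constructor
      · intro _
        exact pos_iff_ne_zero.2 (mul_ne_zero hb hx)
      · intro _
        exact lt_top_iff_ne_top.2 (by simp [ENNReal.div_eq_top, hx])
    · rw [ENNReal.lt_div_iff_mul_lt (Or.inl (ENNReal.coe_ne_zero.2 hy)) (Or.inl coe_ne_top),
        ← ENNReal.mul_div_right_comm,
        ENNReal.div_lt_iff (Or.inl (ENNReal.coe_ne_zero.2 hx)) (Or.inl coe_ne_top)]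
      exact_mod_cast Iff.rfl

lemma cross_eq (a b x y : NNReal) (ha : a ≠ 0) (hb : b ≠ 0) :
    (a : ℝ≥0∞) / (x : ℝ≥0∞) = (b : ℝ≥0∞) / (y : ℝ≥0∞) ↔ a * y = b * x := by
  rcases eq_or_ne x 0 with rfl | hx
  · simp only [ENNReal.coe_zero, ENNReal.div_zero (ENNReal.coe_ne_zero.2 ha), mul_zero]
    rcases eq_or_ne y 0 with rfl | hy
    · simp [ENNReal.div_zero (ENNReal.coe_ne_zero.2 hb)]
    · constructor
      · intro h; exact absurd h.symm (by simp [ENNReal.div_eq_top, hy])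
      · intro h; exact absurd h.symm (Ne.symm (mul_ne_zero ha hy))
  · rcases eq_or_ne y 0 with rfl | hy
    · simp only [ENNReal.coe_zero, ENNReal.div_zero (ENNReal.coe_ne_zero.2 hb), mul_zero]
      constructor
      · intro h; exact absurd h (by simp [ENNReal.div_eq_top, hx])
      · intro h; exact absurd h (Ne.symm (mul_ne_zero hb hx))
    · rw [ENNReal.div_eq_div_iff (ENNReal.coe_ne_zero.2 hy) coe_ne_top
          (ENNReal.coe_ne_zero.2 hx) coe_ne_top]
      rw [mul_comm ((y:ℝ≥0∞)) _, mul_comm ((x:ℝ≥0∞)) _]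
      exact_mod_cast Iff.rfl

lemma coe_add_nat (u : ℕ) (c : NNReal) :
    (((u:NNReal) + c : NNReal) : ℝ≥0∞) = (u : ℝ≥0∞) + (c : ℝ≥0∞) := by
  rw [ENNReal.coe_add, ENNReal.coe_natCast]

lemma cross_lt' (a b u v : ℕ) (c : NNReal) (ha : 0 < a) (hb : 0 < b) :
    (a : ℝ≥0∞) / ((u:ℝ≥0∞) + (c:ℝ≥0∞)) < (b:ℝ≥0∞) / ((v:ℝ≥0∞) + (c:ℝ≥0∞)) ↔
      (a:NNReal) * ((v:NNReal) + c) < (b:NNReal) * ((u:NNReal) + c) := by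
  rw [← coe_add_nat u c, ← coe_add_nat v c, show (a:ℝ≥0∞) = ((a:NNReal):ℝ≥0∞) from
    (ENNReal.coe_natCast a).symm, show (b:ℝ≥0∞) = ((b:NNReal):ℝ≥0∞) from
    (ENNReal.coe_natCast b).symm]
  exact cross_lt _ _ _ _ (by exact_mod_cast ha.ne') (by exact_mod_cast hb.ne')

lemma cross_eq' (a b u v : ℕ) (c : NNReal) (ha : 0 < a) (hb : 0 < b) :
    (a : ℝ≥0∞) / ((u:ℝ≥0∞) + (c:ℝ≥0∞)) = (b:ℝ≥0∞) / ((v:ℝ≥0∞) + (c:ℝ≥0∞)) ↔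
      (a:NNReal) * ((v:NNReal) + c) = (b:NNReal) * ((u:NNReal) + c) := by
  rw [← coe_add_nat u c, ← coe_add_nat v c, show (a:ℝ≥0∞) = ((a:NNReal):ℝ≥0∞) from
    (ENNReal.coe_natCast a).symm, show (b:ℝ≥0∞) = ((b:NNReal):ℝ≥0∞) from
    (ENNReal.coe_natCast b).symm]
  exact cross_eq _ _ _ _ (by exact_mod_cast ha.ne') (by exact_mod_cast hb.ne')

lemma alloc_zero {n : ℕ} (s : ℕ → Fin n) (i : Fin n) : alloc s i 0 = 0 := by
  simp [alloc]

lemma alloc_succ {n : ℕ} (s : ℕ → Fin n) (i : Fin n) (h : ℕ) :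
    alloc s i (h + 1) = alloc s i h + if s h = i then 1 else 0 := by
  unfold alloc
  rw [Finset.range_add_one, Finset.filter_insert]
  split
  · rw [Finset.card_insert_of_notMem (by simp)]
  · rw [add_zero]

lemma alloc_mono {n : ℕ} (s : ℕ → Fin n) (i : Fin n) {h h' : ℕ} (hh : h ≤ h') :
    alloc s i h ≤ alloc s i h' :=
  Finset.card_le_card (Finset.filter_subset_filter _ (Finset.range_subset_range.2 hh))

lemma sum_alloc {n : ℕ} (s : ℕ → Fin n) (h : ℕ) : ∑ i, alloc s i h = h := by
  induction h with
  | zero => simp [alloc]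
  | succ h ih =>
    simp only [alloc_succ, Finset.sum_add_distrib, ih]
    rw [Finset.sum_ite_eq Finset.univ (s h) (fun _ => 1)]
    simp

lemma alloc_congr {n : ℕ} (s s' : ℕ → Fin n) (i : Fin n) (h : ℕ)
    (he : ∀ t < h, s t = s' t) : alloc s i h = alloc s' i h := by
  unfold alloc
  congr 1
  apply Finset.filter_congr
  intro t ht
  rw [he t (Finset.mem_range.1 ht)]

lemma alloc_add {n : ℕ} (s : ℕ → Fin n) (i : Fin n) (N h : ℕ) :
    alloc s i (N + h) = alloc s i N + alloc (fun t => s (N + t)) i h := by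
  induction h with
  | zero => simp [alloc]
  | succ h ih =>
    rw [← add_assoc, alloc_succ, ih, alloc_succ, add_assoc]


/-- For integer votes, the apportionment sequence of a stationary divisor
method with cut point `c ∈ [0,1]` is periodic with minimal period
`P = (p_1 + ⋯ + p_n)/gcd(p_1, …, p_n)`:  `s_{mP+k} = s_k` for all
`1 ≤ k ≤ P` and `m ≥ 1`, and no positive `Q < P` is a period. -/
theorem stationary_seq_periodic {n : ℕ} (hn : 0 < n) (p : Fin n → ℕ)
    (hpos : ∀ i, 0 < p i) (hmono : ∀ i j : Fin n, i ≤ j → p j ≤ p i)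
    (c : NNReal) (hc : c ≤ 1) (s : ℕ → Fin n) (hs : IsStationarySeq p c s)
    (P : ℕ) (hP : P = (∑ i, p i) / Finset.univ.gcd p) :
    (∀ m : ℕ, 1 ≤ m → ∀ k : ℕ, 1 ≤ k → k ≤ P → s (m * P + k - 1) = s (k - 1)) ∧
    (∀ Q : ℕ, 0 < Q → Q < P → ¬ Function.Periodic s Q) := by
  classical
  set d := Finset.univ.gcd p with hd
  have hd_dvd : ∀ i, d ∣ p i := fun i => Finset.gcd_dvd (Finset.mem_univ i)
  have hd_pos : 0 < d := by
    rcases Nat.eq_zero_or_pos d with h0 | h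
    · exfalso
      have := (Finset.gcd_eq_zero_iff.1 h0) ⟨0, hn⟩ (Finset.mem_univ _)
      exact (hpos ⟨0, hn⟩).ne' this
    · exact h
  set q : Fin n → ℕ := fun i => p i / d with hq
  have hpq : ∀ i, p i = d * q i := fun i => (Nat.mul_div_cancel' (hd_dvd i)).symm
  have hq_pos : ∀ i, 0 < q i :=
    fun i => Nat.div_pos (Nat.le_of_dvd (hpos i) (hd_dvd i)) hd_pos
  have hsumq : ∑ i, q i = P := by
    rw [hP]
    have hsum : ∑ i, p i = d * ∑ i, q i := by
      rw [Finset.mul_sum]; exact Finset.sum_congr rfl fun i _ => hpq i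
    rw [hsum, Nat.mul_div_cancel_left _ hd_pos]
  have key : ∀ i j : Fin n, p i * q j = p j * q i := by
    intro i j; rw [hpq i, hpq j]; ring
  -- cross-multiplied max property
  have hmax : ∀ h j, (p j : NNReal) * ((alloc s (s h) h : NNReal) + c) ≤
      (p (s h) : NNReal) * ((alloc s j h : NNReal) + c) := by
    intro h j
    rcases hs h j with hlt | ⟨heq, _⟩
    · exact le_of_lt ((cross_lt' _ _ _ _ c (hpos j) (hpos (s h))).1 hlt)
    · exact le_of_eq ((cross_eq' _ _ _ _ c (hpos (s h)) (hpos j)).1 heq).symm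
  -- cross-multiplied tie-breaking
  have htie : ∀ h j, (p (s h) : NNReal) * ((alloc s j h : NNReal) + c) =
      (p j : NNReal) * ((alloc s (s h) h : NNReal) + c) → s h ≤ j := by
    intro h j he
    rcases hs h j with hlt | ⟨_, hle⟩
    · have hlt' := (cross_lt' _ _ _ _ c (hpos j) (hpos (s h))).1 hlt
      rw [he] at hlt'
      exact absurd hlt' (lt_irrefl _)
    · exact hle
  -- uniqueness of the winner
  have huniq : ∀ h w, (∀ j, (p j : NNReal) * ((alloc s w h : NNReal) + c) ≤
        (p w : NNReal) * ((alloc s j h : NNReal) + c)) →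
      (∀ j, (p w : NNReal) * ((alloc s j h : NNReal) + c) =
        (p j : NNReal) * ((alloc s w h : NNReal) + c) → w ≤ j) →
      s h = w := by
    intro h w hw1 hw2
    have h1 := hmax h w
    have h2 := hw1 (s h)
    have he := le_antisymm h2 h1
    exact le_antisymm (htie h w he) (hw2 (s h) he.symm)
  -- the exchange invariant
  have hinv : ∀ h, ∀ i j : Fin n, ∀ a : ℕ, alloc s i h = a + 1 →
      (p j : NNReal) * ((a : NNReal) + c) ≤
        (p i : NNReal) * ((alloc s j h : NNReal) + c) := by
    intro h
    induction h with
    | zero =>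
      intro i j a ha
      rw [alloc_zero] at ha
      exact absurd ha (by omega)
    | succ h ih =>
      intro i j a ha
      have hcast : ((alloc s j h : NNReal) + c) ≤ ((alloc s j (h+1) : NNReal) + c) := by
        have := alloc_mono s j (Nat.le_succ h)
        exact add_le_add_left (by exact_mod_cast this) c
      by_cases hi : s h = i
      · subst hi
        rw [alloc_succ, if_pos rfl] at ha
        have ha' : alloc s (s h) h = a := by omega
        calc (p j : NNReal) * ((a : NNReal) + c)
            = (p j : NNReal) * ((alloc s (s h) h : NNReal) + c) := by rw [ha']
          _ ≤ (p (s h) : NNReal) * ((alloc s j h : NNReal) + c) := hmax h j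
          _ ≤ (p (s h) : NNReal) * ((alloc s j (h+1) : NNReal) + c) :=
              mul_le_mul_right hcast _
      · rw [alloc_succ, if_neg hi, add_zero] at ha
        calc (p j : NNReal) * ((a : NNReal) + c)
            ≤ (p i : NNReal) * ((alloc s j h : NNReal) + c) := ih i j a ha
          _ ≤ (p i : NNReal) * ((alloc s j (h+1) : NNReal) + c) :=
              mul_le_mul_right hcast _
  -- weak proportionality: exact allocation at multiples of P
  have hstepB : ∀ m : ℕ, ∀ i, alloc s i (m * P) = m * q i := by
    intro m
    have hsum_eq : ∑ i, alloc s i (m * P) = ∑ i, m * q i := by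
      rw [sum_alloc, ← Finset.mul_sum, hsumq]
    have hnotover : ∀ i, ¬ m * q i < alloc s i (m * P) := by
      intro i hi
      have hunder : ∃ j, alloc s j (m * P) < m * q j := by
        by_contra hno
        push_neg at hno
        have := Finset.sum_lt_sum (fun j _ => hno j) ⟨i, Finset.mem_univ i, hi⟩
        omega
      obtain ⟨j, hj⟩ := hunder
      obtain ⟨a, hA⟩ : ∃ a, alloc s i (m * P) = a + 1 :=
        ⟨alloc s i (m * P) - 1, by omega⟩
      have hinv' := hinv (m * P) i j a hA
      have hR := (NNReal.coe_le_coe).2 hinv'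
      push_cast at hR
      -- numeric contradiction in ℝ
      have hC0 : (0 : ℝ) ≤ (c : ℝ) := c.coe_nonneg
      have hC1 : (c : ℝ) ≤ 1 := by exact_mod_cast hc
      have hA1 : ((m : ℝ) * (q i : ℝ)) ≤ ((a : ℕ) : ℝ) := by
        have : m * q i ≤ a := by omega
        exact_mod_cast this
      have hA2 : ((alloc s j (m * P) : ℕ) : ℝ) ≤ (m : ℝ) * (q j : ℝ) - 1 := by
        have : alloc s j (m * P) + 1 ≤ m * q j := by omega
        have := (Nat.cast_le (α := ℝ)).2 this
        push_cast at this
        linarith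
      have hpi : (1 : ℝ) ≤ (p i : ℝ) := by exact_mod_cast hpos i
      have hpj : (1 : ℝ) ≤ (p j : ℝ) := by exact_mod_cast hpos j
      have hkey : (p j : ℝ) * (q i : ℝ) = (p i : ℝ) * (q j : ℝ) := by
        exact_mod_cast congrArg (Nat.cast (R := ℝ)) (key j i)
      have hfin : (p j : ℝ) * ((m : ℝ) * (q i : ℝ) + (c : ℝ)) ≤
          (p i : ℝ) * ((m : ℝ) * (q j : ℝ) - 1 + (c : ℝ)) := by
        calc (p j : ℝ) * ((m : ℝ) * (q i : ℝ) + (c : ℝ))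
            ≤ (p j : ℝ) * (((a : ℕ) : ℝ) + (c : ℝ)) := by
              apply mul_le_mul_of_nonneg_left (by linarith) (by linarith)
          _ ≤ (p i : ℝ) * (((alloc s j (m * P) : ℕ) : ℝ) + (c : ℝ)) := hR
          _ ≤ (p i : ℝ) * ((m : ℝ) * (q j : ℝ) - 1 + (c : ℝ)) := by
              apply mul_le_mul_of_nonneg_left (by linarith) (by linarith)
      nlinarith [mul_nonneg (by linarith : (0:ℝ) ≤ (p j : ℝ)) hC0,
        mul_le_of_le_one_right (by linarith : (0:ℝ) ≤ (p i : ℝ)) hC1,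
        mul_le_mul_of_nonneg_left hC1 (by linarith : (0:ℝ) ≤ (p j : ℝ)),
        mul_pos (by linarith : (0:ℝ) < (p j : ℝ)) (lt_of_lt_of_le zero_lt_one hpi)]
    intro i
    have hle : ∀ i, alloc s i (m * P) ≤ m * q i := fun i => not_lt.1 (hnotover i)
    by_contra hne
    have hlt : alloc s i (m * P) < m * q i := lt_of_le_of_ne (hle i) hne
    have := Finset.sum_lt_sum (fun j _ => hle j) ⟨i, Finset.mem_univ i, hlt⟩
    omega
  -- winner at shifted times
  have hwin : ∀ m t, (∀ i, alloc s i (m * P + t) = m * q i + alloc s i t) →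
      s (m * P + t) = s t := by
    intro m t hA
    have hk : ∀ j, (p j : NNReal) * ((m : NNReal) * (q (s t) : NNReal)) =
        (p (s t) : NNReal) * ((m : NNReal) * (q j : NNReal)) := by
      intro j
      have hk' : (p j : NNReal) * (q (s t) : NNReal) =
          (p (s t) : NNReal) * (q j : NNReal) := by
        exact_mod_cast congrArg (Nat.cast (R := NNReal)) (key j (s t))
      rw [mul_left_comm, hk', mul_left_comm]
    apply huniq
    · intro j
      rw [hA (s t), hA j]
      push_cast
      calc (p j : NNReal) * ((m : NNReal) * (q (s t) : NNReal) +
            (alloc s (s t) t : NNReal) + c)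
          = (p j : NNReal) * ((m : NNReal) * (q (s t) : NNReal)) +
            (p j : NNReal) * ((alloc s (s t) t : NNReal) + c) := by ring
        _ = (p (s t) : NNReal) * ((m : NNReal) * (q j : NNReal)) +
            (p j : NNReal) * ((alloc s (s t) t : NNReal) + c) := by rw [hk j]
        _ ≤ (p (s t) : NNReal) * ((m : NNReal) * (q j : NNReal)) +
            (p (s t) : NNReal) * ((alloc s j t : NNReal) + c) :=
            add_le_add_right (hmax t j) _
        _ = (p (s t) : NNReal) * ((m : NNReal) * (q j : NNReal) +
            (alloc s j t : NNReal) + c) := by ring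
    · intro j he
      rw [hA (s t), hA j] at he
      push_cast at he
      have he' : (p (s t) : NNReal) * ((m : NNReal) * (q j : NNReal)) +
          (p (s t) : NNReal) * ((alloc s j t : NNReal) + c) =
          (p (s t) : NNReal) * ((m : NNReal) * (q j : NNReal)) +
          (p j : NNReal) * ((alloc s (s t) t : NNReal) + c) := by
        calc (p (s t) : NNReal) * ((m : NNReal) * (q j : NNReal)) +
              (p (s t) : NNReal) * ((alloc s j t : NNReal) + c)
            = (p (s t) : NNReal) * ((m : NNReal) * (q j : NNReal) +
              (alloc s j t : NNReal) + c) := by ring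
          _ = (p j : NNReal) * ((m : NNReal) * (q (s t) : NNReal) +
              (alloc s (s t) t : NNReal) + c) := he
          _ = (p j : NNReal) * ((m : NNReal) * (q (s t) : NNReal)) +
              (p j : NNReal) * ((alloc s (s t) t : NNReal) + c) := by ring
          _ = (p (s t) : NNReal) * ((m : NNReal) * (q j : NNReal)) +
              (p j : NNReal) * ((alloc s (s t) t : NNReal) + c) := by rw [hk j]
      exact htie t j (add_left_cancel he')
  -- shifted allocations
  have hshift : ∀ m t i, alloc s i (m * P + t) = m * q i + alloc s i t := by
    intro m t
    induction t with
    | zero => intro i; simpa [alloc_zero] using hstepB m i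
    | succ t ih =>
      intro i
      have hst := hwin m t ih
      rw [show m * P + (t + 1) = (m * P + t) + 1 from rfl, alloc_succ, hst,
        alloc_succ, ih i, add_assoc]
  have hsEq : ∀ m t, s (m * P + t) = s t := fun m t => hwin m t (hshift m t)
  constructor
  · intro m _ k hk1 _
    have hrw : m * P + k - 1 = m * P + (k - 1) := by omega
    rw [hrw]
    exact hsEq m (k - 1)
  · intro Q hQ0 hQP hper
    have hperm : ∀ m t, s (t + m * Q) = s t := by
      intro m
      induction m with
      | zero => simp
      | succ m ih =>
        intro t
        rw [show t + (m + 1) * Q = (t + m * Q) + Q by ring, hper (t + m * Q)]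
        exact ih t
    have hallocQ : ∀ m i, alloc s i (m * Q) = m * alloc s i Q := by
      intro m i
      induction m with
      | zero => simp [alloc_zero]
      | succ m ih =>
        rw [show (m + 1) * Q = m * Q + Q by ring, alloc_add, ih]
        have hcg : alloc (fun t => s (m * Q + t)) i Q = alloc s i Q :=
          alloc_congr _ _ i Q (fun t _ => by rw [add_comm (m * Q) t]; exact hperm m t)
        rw [hcg]; ring
    have h1 : ∀ i, Q * q i = P * alloc s i Q := by
      intro i
      have a1 := hstepB Q i
      have a2 := hallocQ P i
      rw [mul_comm P Q] at a2
      omega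
    have hq1 : Finset.univ.gcd q = 1 := by
      have hdg : d * Finset.univ.gcd q ∣ d := by
        rw [hd]
        apply Finset.dvd_gcd
        intro i _
        rw [← hd, hpq i]
        exact mul_dvd_mul_left d (Finset.gcd_dvd (Finset.mem_univ i))
      have : Finset.univ.gcd q ∣ 1 :=
        (Nat.mul_dvd_mul_iff_left hd_pos).1 (by simpa using hdg)
      exact Nat.dvd_one.1 this
    have hPdvd : P ∣ Q := by
      have hgcd : P ∣ Finset.univ.gcd (fun i => Q * q i) :=
        Finset.dvd_gcd (fun i _ => ⟨alloc s i Q, h1 i⟩)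
      rw [Finset.gcd_mul_left, hq1] at hgcd
      simpa using hgcd
    exact absurd (Nat.le_of_dvd hQ0 hPdvd) (not_le.2 hQP)
end

section
/- Suppose p_1 > p_2 + 1 are coprime, p_1 = a·p_2 + b with 0 < b < p_2, and c ∈ [ℓ/(p_1−p_2), (ℓ+1)/(p_1−p_2)) with ℓ = ν·p_2 + ℓ′, 0 ≤ ℓ′ < p_2. Then k_1 = ν + 1 and, for 2 ≤ i ≤ p_2, k_i = a + 1 if i = ⌈(j·p_2 − ℓ′)/b⌉ + 1 for some j ∈ {1, ..., b}, and k_i = a otherwise; in particular the values k_2, ..., k_{p_2} depend only on ℓ′ and b, not on ν. -/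
/-- Partial sum `Σ_{j≤i} k_j` of run lengths of the two-party sequence for cut
point `c`: `runSum p1 p2 c i = ⌊(p_1/p_2)(i−1) + (p_1−p_2)c/p_2⌋ + 1`. -/
noncomputable def runSum (p1 p2 : ℕ) (c : ℝ) (i : ℕ) : ℤ :=
  ⌊(p1 : ℝ) / p2 * ((i : ℝ) - 1) + ((p1 : ℝ) - p2) * c / p2⌋ + 1

private lemma floor_intAdd_div (n d : ℤ) (hd : 0 < d) (θ : ℝ) (h0 : 0 ≤ θ) (h1 : θ < 1) :
    ⌊((n : ℝ) + θ) / d⌋ = n / d := by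
  have hd' : (0:ℝ) < (d:ℝ) := by exact_mod_cast hd
  rw [Int.floor_eq_iff]
  constructor
  · rw [le_div_iff₀ hd']
    have : (n / d) * d ≤ n := Int.ediv_mul_le n hd.ne'
    have : ((n / d * d : ℤ) : ℝ) ≤ (n : ℝ) := by exact_mod_cast this
    push_cast at this ⊢
    linarith
  · rw [div_lt_iff₀ hd']
    have h : n + 1 ≤ (n / d + 1) * d := Int.lt_ediv_add_one_mul_self n hd
    have h' : ((n + 1 : ℤ) : ℝ) ≤ (((n / d + 1) * d : ℤ) : ℝ) := by exact_mod_cast h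
    push_cast at h' ⊢
    linarith

private lemma runSum_eq (p1 p2 ℓ : ℕ) (hp2 : 0 < p2) (hp : (p2 : ℝ) < p1)
    (c : ℝ) (hc1 : ((ℓ : ℕ) : ℝ) / ((p1 : ℝ) - p2) ≤ c)
    (hc2 : c < (((ℓ : ℕ) : ℝ) + 1) / ((p1 : ℝ) - p2)) (i : ℕ) :
    runSum p1 p2 c i = ((p1 : ℤ) * ((i : ℤ) - 1) + ℓ) / p2 + 1 := by
  have hpos : (0:ℝ) < (p1 : ℝ) - p2 := by linarith
  have hx1 : (ℓ : ℝ) ≤ ((p1 : ℝ) - p2) * c := by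
    rw [div_le_iff₀ hpos] at hc1; linarith [hc1]
  have hx2 : ((p1 : ℝ) - p2) * c < (ℓ : ℝ) + 1 := by
    rw [lt_div_iff₀ hpos] at hc2; linarith [hc2]
  have hp2' : (0:ℝ) < (p2 : ℝ) := by exact_mod_cast hp2
  unfold runSum
  congr 1
  have heq : (p1 : ℝ) / p2 * ((i : ℝ) - 1) + ((p1 : ℝ) - p2) * c / p2
      = ((((p1 : ℤ) * ((i : ℤ) - 1) + ℓ : ℤ) : ℝ) + (((p1 : ℝ) - p2) * c - ℓ)) / p2 := by
    push_cast
    field_simp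
    ring
  rw [heq]
  exact floor_intAdd_div _ _ (by exact_mod_cast hp2) _ (by linarith) (by linarith)

private lemma run_diff (p1 p2 a b ν ℓ' : ℕ) (hp2 : 0 < p2) (hp : (p2 : ℝ) < p1)
    (hdiv : p1 = a * p2 + b)
    (c : ℝ) (hc1 : ((ν * p2 + ℓ' : ℕ) : ℝ) / ((p1 : ℝ) - p2) ≤ c)
    (hc2 : c < (((ν * p2 + ℓ' : ℕ) : ℝ) + 1) / ((p1 : ℝ) - p2))
    (i : ℕ) (h2 : 2 ≤ i) :
    runSum p1 p2 c i - runSum p1 p2 c (i - 1) =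
      (a : ℤ) + (((b : ℤ) * ((i : ℤ) - 1) + ℓ') / p2 - ((b : ℤ) * ((i : ℤ) - 2) + ℓ') / p2) := by
  rw [runSum_eq p1 p2 _ hp2 hp c hc1 hc2 i, runSum_eq p1 p2 _ hp2 hp c hc1 hc2 (i - 1)]
  have hcast : ((i - 1 : ℕ) : ℤ) = (i : ℤ) - 1 := by omega
  rw [hcast]
  have hp2z : (p2 : ℤ) ≠ 0 := by exact_mod_cast hp2.ne'
  have e1 : (p1 : ℤ) * ((i : ℤ) - 1) + ((ν * p2 + ℓ' : ℕ) : ℤ)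
      = ((b : ℤ) * ((i : ℤ) - 1) + ℓ') + ((a : ℤ) * ((i : ℤ) - 1) + ν) * p2 := by
    have h : (p1 : ℤ) = a * p2 + b := by exact_mod_cast hdiv
    push_cast
    rw [h]; ring
  have e2 : (p1 : ℤ) * (((i : ℤ) - 1) - 1) + ((ν * p2 + ℓ' : ℕ) : ℤ)
      = ((b : ℤ) * ((i : ℤ) - 2) + ℓ') + ((a : ℤ) * ((i : ℤ) - 2) + ν) * p2 := by
    have h : (p1 : ℤ) = a * p2 + b := by exact_mod_cast hdiv
    push_cast
    rw [h]; ring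
  rw [e1, e2, Int.add_mul_ediv_right _ _ hp2z, Int.add_mul_ediv_right _ _ hp2z]
  ring

private lemma jump_iff (p2 b ℓ' : ℕ) (hp2 : 0 < p2) (hb0 : 0 < b) (hbp : b < p2)
    (hl' : ℓ' < p2) (i : ℕ) (h2 : 2 ≤ i) (hip : i ≤ p2) :
    (∃ j, 1 ≤ j ∧ j ≤ b ∧
        (i : ℤ) = ⌈(((j * p2 : ℕ) : ℚ) - (ℓ' : ℚ)) / (b : ℚ)⌉ + 1) ↔
    ((b : ℤ) * ((i : ℤ) - 2) + ℓ') / p2 < ((b : ℤ) * ((i : ℤ) - 1) + ℓ') / p2 := by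
  have hp2z : (0:ℤ) < (p2 : ℤ) := by exact_mod_cast hp2
  have hbq : (0:ℚ) < (b : ℚ) := by exact_mod_cast hb0
  constructor
  · rintro ⟨j, hj1, hjb, hij⟩
    have hceil : ⌈(((j * p2 : ℕ) : ℚ) - (ℓ' : ℚ)) / (b : ℚ)⌉ = (i : ℤ) - 1 := by omega
    rw [Int.ceil_eq_iff] at hceil
    obtain ⟨hlo, hhi⟩ := hceil
    rw [lt_div_iff₀ hbq] at hlo
    rw [div_le_iff₀ hbq] at hhi
    have h1q : ((((i : ℤ) - 2) * b : ℤ) : ℚ) < (((j : ℤ) * p2 - ℓ' : ℤ) : ℚ) := by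
      push_cast at hlo ⊢; linarith
    have h2q : (((j : ℤ) * p2 - ℓ' : ℤ) : ℚ) ≤ ((((i : ℤ) - 1) * b : ℤ) : ℚ) := by
      push_cast at hhi ⊢; linarith
    have h1 : ((i : ℤ) - 2) * b < (j : ℤ) * p2 - ℓ' := by exact_mod_cast h1q
    have h2' : (j : ℤ) * p2 - ℓ' ≤ ((i : ℤ) - 1) * b := by exact_mod_cast h2q
    calc ((b : ℤ) * ((i : ℤ) - 2) + ℓ') / p2
        < (j : ℤ) := by rw [Int.ediv_lt_iff_lt_mul hp2z]; linarith
      _ ≤ ((b : ℤ) * ((i : ℤ) - 1) + ℓ') / p2 := by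
          rw [Int.le_ediv_iff_mul_le hp2z]; linarith
  · intro hlt
    set m : ℤ := (b : ℤ) * ((i : ℤ) - 2) + ℓ' with hm
    set n : ℤ := (b : ℤ) * ((i : ℤ) - 1) + ℓ' with hn
    set jz : ℤ := n / p2 with hjz
    have hjn : jz * p2 ≤ n := Int.ediv_mul_le n hp2z.ne'
    have hmj : m < jz * p2 := by
      have h1 : m < (m / p2 + 1) * p2 := Int.lt_ediv_add_one_mul_self m hp2z
      have h2' : (m / p2 + 1) * p2 ≤ jz * p2 := by
        apply mul_le_mul_of_nonneg_right _ hp2z.le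
        omega
      linarith
    have hm0 : 0 ≤ m := by
      have : (0:ℤ) ≤ (i : ℤ) - 2 := by omega
      positivity
    have hjz1 : 1 ≤ jz := by nlinarith
    have hjzb : jz ≤ b := by
      have : n < ((b : ℤ) + 1) * p2 := by
        have hi : (i : ℤ) ≤ p2 := by exact_mod_cast hip
        have hl : (ℓ' : ℤ) < p2 := by exact_mod_cast hl'
        have hb : (0:ℤ) < b := by exact_mod_cast hb0
        nlinarith
      nlinarith
    refine ⟨jz.toNat, by omega, by omega, ?_⟩
    have hjcast : ((jz.toNat : ℕ) : ℤ) = jz := Int.toNat_of_nonneg (by omega)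
    have hjq : ((jz.toNat : ℕ) : ℚ) = ((jz : ℤ) : ℚ) := by exact_mod_cast hjcast
    have hA : ((i : ℤ) - 2) * b < jz * p2 - ℓ' := by rw [hm] at hmj; linarith
    have hB : jz * p2 - ℓ' ≤ ((i : ℤ) - 1) * b := by rw [hn] at hjn; linarith
    have hAq : (((i : ℚ) - 2)) * b < ((jz : ℤ) : ℚ) * p2 - ℓ' := by
      exact_mod_cast hA
    have hBq : ((jz : ℤ) : ℚ) * p2 - ℓ' ≤ ((i : ℚ) - 1) * b := by
      exact_mod_cast hB
    have hceil : ⌈(((jz.toNat * p2 : ℕ) : ℚ) - (ℓ' : ℚ)) / (b : ℚ)⌉ = (i : ℤ) - 1 := by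
      rw [Int.ceil_eq_iff]
      constructor
      · rw [lt_div_iff₀ hbq]
        push_cast [hjq]
        linarith
      · rw [div_le_iff₀ hbq]
        push_cast [hjq]
        linarith
    omega

private lemma jump_le (p2 b ℓ' : ℕ) (hp2 : 0 < p2) (hbp : b < p2) (i : ℕ) :
    ((b : ℤ) * ((i : ℤ) - 1) + ℓ') / p2 ≤ ((b : ℤ) * ((i : ℤ) - 2) + ℓ') / p2 + 1 := by
  have hp2z : (0:ℤ) < (p2 : ℤ) := by exact_mod_cast hp2
  have hb : (b : ℤ) < p2 := by exact_mod_cast hbp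
  have h : (b : ℤ) * ((i : ℤ) - 1) + ℓ' ≤ ((b : ℤ) * ((i : ℤ) - 2) + ℓ') + 1 * p2 := by nlinarith
  calc ((b : ℤ) * ((i : ℤ) - 1) + ℓ') / p2
      ≤ (((b : ℤ) * ((i : ℤ) - 2) + ℓ') + 1 * p2) / p2 := Int.ediv_le_ediv hp2z h
    _ = ((b : ℤ) * ((i : ℤ) - 2) + ℓ') / p2 + 1 := Int.add_mul_ediv_right _ _ hp2z.ne'

private lemma jump_mono (p2 b ℓ' : ℕ) (hp2 : 0 < p2) (hb0 : 0 < b) (i : ℕ) (h2 : 2 ≤ i) :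
    ((b : ℤ) * ((i : ℤ) - 2) + ℓ') / p2 ≤ ((b : ℤ) * ((i : ℤ) - 1) + ℓ') / p2 := by
  have hp2z : (0:ℤ) < (p2 : ℤ) := by exact_mod_cast hp2
  apply Int.ediv_le_ediv hp2z
  have : (0:ℤ) ≤ b := by positivity
  nlinarith

/-- For coprime `p_1 > p_2 + 1` with `p_1 = a·p_2 + b`, `0 < b < p_2`, and cut
point `c ∈ [ℓ/(p_1−p_2), (ℓ+1)/(p_1−p_2))` where `ℓ = ν·p_2 + ℓ′`, `ℓ′ < p_2`:
the run lengths satisfy `k_1 = ν + 1` and, for `2 ≤ i ≤ p_2`, `k_i = a + 1` if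
`i = ⌈(j·p_2 − ℓ′)/b⌉ + 1` for some `j ∈ {1, …, b}` and `k_i = a` otherwise;
in particular `k_2, …, k_{p_2}` depend only on `ℓ′` and `b`, not on `ν`. -/
theorem run_lengths_on_interval (p1 p2 a b ν ℓ' : ℕ) (hco : Nat.Coprime p1 p2)
    (hp2 : 0 < p2) (hgt : p2 + 1 < p1)
    (hdiv : p1 = a * p2 + b) (hb0 : 0 < b) (hbp : b < p2)
    (hl' : ℓ' < p2) (hl : ν * p2 + ℓ' < p1 - p2)
    (c : ℝ)
    (hc1 : ((ν * p2 + ℓ' : ℕ) : ℝ) / ((p1 : ℝ) - p2) ≤ c)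
    (hc2 : c < (((ν * p2 + ℓ' : ℕ) : ℝ) + 1) / ((p1 : ℝ) - p2)) :
    runSum p1 p2 c 1 = ν + 1 ∧
    (∀ i, 2 ≤ i → i ≤ p2 →
      ((∃ j, 1 ≤ j ∧ j ≤ b ∧
          (i : ℤ) = ⌈(((j * p2 : ℕ) : ℚ) - (ℓ' : ℚ)) / (b : ℚ)⌉ + 1) →
        runSum p1 p2 c i - runSum p1 p2 c (i - 1) = a + 1) ∧
      (¬ (∃ j, 1 ≤ j ∧ j ≤ b ∧
          (i : ℤ) = ⌈(((j * p2 : ℕ) : ℚ) - (ℓ' : ℚ)) / (b : ℚ)⌉ + 1) →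
        runSum p1 p2 c i - runSum p1 p2 c (i - 1) = a)) ∧
    (∀ ν₂ : ℕ, ∀ c₂ : ℝ, ν₂ * p2 + ℓ' < p1 - p2 →
      ((ν₂ * p2 + ℓ' : ℕ) : ℝ) / ((p1 : ℝ) - p2) ≤ c₂ →
      c₂ < (((ν₂ * p2 + ℓ' : ℕ) : ℝ) + 1) / ((p1 : ℝ) - p2) →
      ∀ i, 2 ≤ i → i ≤ p2 →
        runSum p1 p2 c i - runSum p1 p2 c (i - 1) =
          runSum p1 p2 c₂ i - runSum p1 p2 c₂ (i - 1)) := by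
  have hp : (p2 : ℝ) < p1 := by exact_mod_cast (by omega : p2 < p1)
  refine ⟨?_, ?_, ?_⟩
  · rw [runSum_eq p1 p2 _ hp2 hp c hc1 hc2 1]
    have : ((1:ℕ) : ℤ) - 1 = 0 := by norm_num
    rw [this, mul_zero, zero_add]
    have : ((ν * p2 + ℓ' : ℕ) : ℤ) / (p2 : ℤ) = ν := by
      have hle : ((ℓ' : ℤ)) / (p2 : ℤ) = 0 :=
        Int.ediv_eq_zero_of_lt (by positivity) (by exact_mod_cast hl')
      have h1 : ((ν * p2 + ℓ' : ℕ) : ℤ) = (ℓ' : ℤ) + (ν : ℤ) * p2 := by push_cast; ring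
      rw [h1, Int.add_mul_ediv_right _ _ (by exact_mod_cast hp2.ne' : (p2:ℤ) ≠ 0), hle, zero_add]
    omega
  · intro i h2 hip
    have hd := run_diff p1 p2 a b ν ℓ' hp2 hp hdiv c hc1 hc2 i h2
    have hle := jump_le p2 b ℓ' hp2 hbp i
    have hmono := jump_mono p2 b ℓ' hp2 hb0 i h2
    constructor
    · intro hex
      have := (jump_iff p2 b ℓ' hp2 hb0 hbp hl' i h2 hip).mp hex
      omega
    · intro hnex
      have := (jump_iff p2 b ℓ' hp2 hb0 hbp hl' i h2 hip).not.mp hnex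
      omega
  · intro ν₂ c₂ _ hc1' hc2' i h2 hip
    rw [run_diff p1 p2 a b ν ℓ' hp2 hp hdiv c hc1 hc2 i h2,
      run_diff p1 p2 a b ν₂ ℓ' hp2 hp hdiv c₂ hc1' hc2' i h2]
end
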